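/- Let φ : ℝ → ℝ be C² and monotonically increasing with |φ''(s)| ≤ M·φ'(s)^{1/r} for all s ∈ ℝ, where r > 1 and M ≥ 0. Then for all s ∈ ℝ, φ'(s)^{(r-1)/r} ≤ φ'(0)^{(r-1)/r} + M·((r-1)/r)·|s|. -/

import Mathlib

open Filter Topology

/-- At most linear growth of (φ')^{(r-1)/r} under the growth condition (2.1). -/
theorem stmt_2
    (φ : ℝ → ℝ) (hφ : ContDiff ℝ 2 φ) (hmono : Monotone φ)
    (r M : ℝ) (hr : 1 < r) (hM : 0 ≤ M)
    (hgrowth : ∀ s : ℝ, |deriv (deriv φ) s| ≤ M * (deriv φ s) ^ (1 / r)) :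
    ∀ s : ℝ,
      (deriv φ s) ^ ((r - 1) / r) ≤ (deriv φ 0) ^ ((r - 1) / r) + M * ((r - 1) / r) * |s| := by
  intro s
  have hr0 : (0:ℝ) < r := lt_trans one_pos hr
  set α : ℝ := (r - 1) / r with hαdef
  have hα0 : 0 < α := div_pos (by linarith) hr0
  have hφ' : ContDiff ℝ 1 (deriv φ) := by
    have hφ2 : ContDiff ℝ ((1:ℕ) + 1) φ := by
      rw [show ((1:ℕ)+1 : WithTop ℕ∞) = 2 by norm_num]; exact hφ
    exact (contDiff_succ_iff_deriv.mp hφ2).2.2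
  have hd : ∀ t, HasDerivAt (deriv φ) (deriv (deriv φ) t) t := fun t =>
    ((hφ'.differentiable one_ne_zero) t).hasDerivAt
  have hdiff : Differentiable ℝ φ := hφ.differentiable (by norm_num)
  have hpos : ∀ t, 0 ≤ deriv φ t := by
    intro t
    have h := hasDerivAt_iff_tendsto_slope.mp (hdiff t).hasDerivAt
    refine ge_of_tendsto h ?_
    filter_upwards [self_mem_nhdsWithin] with y hy
    have hyt : y ≠ t := hy
    rcases lt_or_gt_of_ne hyt with h1 | h1
    · have h3 : φ y - φ t ≤ 0 := sub_nonpos.mpr (hmono h1.le)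
      have h2 : y - t < 0 := sub_neg.mpr h1
      have h4 : 0 ≤ (φ y - φ t) / (y - t) := by
        have := div_nonneg (neg_nonneg.mpr h3) (neg_nonneg.mpr h2.le)
        rwa [neg_div_neg_eq] at this
      simpa [slope_def_field] using h4
    · have : 0 ≤ φ y - φ t := sub_nonneg.mpr (hmono h1.le)
      have h2 : 0 < y - t := sub_pos.mpr h1
      simpa [slope_def_field] using div_nonneg this h2.le
  have key : ∀ ε : ℝ, 0 < ε →
      (deriv φ s) ^ α ≤ (deriv φ 0 + ε) ^ α + M * α * |s| := by
    intro ε hε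
    have hbase : ∀ t, 0 < deriv φ t + ε := fun t =>
      add_pos_of_nonneg_of_pos (hpos t) hε
    set g : ℝ → ℝ := fun t => (deriv φ t + ε) ^ α with hg
    set g' : ℝ → ℝ := fun t => deriv (deriv φ) t * α * (deriv φ t + ε) ^ (α - 1) with hg'
    have hgd : ∀ t, HasDerivAt g (g' t) t := fun t =>
      ((hd t).add_const ε).rpow_const (Or.inl (ne_of_gt (hbase t)))
    have hbound : ∀ t, ‖g' t‖ ≤ M * α := by
      intro t
      have hb1 : (0:ℝ) < (deriv φ t + ε) ^ (α - 1) := Real.rpow_pos_of_pos (hbase t) _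
      have h1 : |deriv (deriv φ) t| ≤ M * (deriv φ t) ^ (1/r) := hgrowth t
      have h2 : (deriv φ t) ^ (1/r) ≤ (deriv φ t + ε) ^ (1/r) :=
        Real.rpow_le_rpow (hpos t) (by linarith) (by positivity)
      have h3 : (deriv φ t + ε) ^ (α - 1) * (deriv φ t + ε) ^ (1/r) = 1 := by
        rw [← Real.rpow_add (hbase t)]
        have he : α - 1 + 1/r = 0 := by
          rw [hαdef]; field_simp; ring
        rw [he, Real.rpow_zero]
      have : ‖g' t‖ = |deriv (deriv φ) t| * α * (deriv φ t + ε) ^ (α - 1) := by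
        rw [hg']
        rw [Real.norm_eq_abs, abs_mul, abs_mul, abs_of_pos hα0, abs_of_pos hb1]
      rw [this]
      calc |deriv (deriv φ) t| * α * (deriv φ t + ε) ^ (α - 1)
          ≤ (M * (deriv φ t + ε) ^ (1/r)) * α * (deriv φ t + ε) ^ (α - 1) := by
            apply mul_le_mul_of_nonneg_right _ hb1.le
            apply mul_le_mul_of_nonneg_right _ hα0.le
            exact h1.trans (mul_le_mul_of_nonneg_left h2 hM)
        _ = M * α * ((deriv φ t + ε) ^ (α - 1) * (deriv φ t + ε) ^ (1/r)) := by ring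
        _ = M * α := by rw [h3, mul_one]
    have hlip : ‖g s - g 0‖ ≤ M * α * ‖s - 0‖ :=
      Convex.norm_image_sub_le_of_norm_hasDerivWithin_le
        (fun x _ => (hgd x).hasDerivWithinAt)
        (fun x _ => hbound x) convex_univ (Set.mem_univ 0) (Set.mem_univ s)
    have h4 : g s ≤ g 0 + M * α * |s| := by
      have := (abs_sub_le_iff.mp (by simpa [Real.norm_eq_abs] using hlip)).1
      simpa using by linarith [this]
    have h5 : (deriv φ s) ^ α ≤ g s :=
      Real.rpow_le_rpow (hpos s) (by linarith) hα0.le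
    exact h5.trans h4
  -- take ε → 0⁺
  have hcont : Tendsto (fun ε : ℝ => (deriv φ 0 + ε) ^ α + M * α * |s|) (𝓝[>] (0:ℝ))
      (𝓝 ((deriv φ 0) ^ α + M * α * |s|)) := by
    have h0 : ContinuousAt (fun x : ℝ => x ^ α) (deriv φ 0 + 0) :=
      Real.continuousAt_rpow_const _ _ (Or.inr hα0.le)
    have h1 : ContinuousAt (fun ε : ℝ => (deriv φ 0 + ε) ^ α + M * α * |s|) 0 := by
      exact ((h0.comp (continuousAt_const.add continuousAt_id)).add continuousAt_const)
    have h2 : Tendsto (fun ε : ℝ => (deriv φ 0 + ε) ^ α + M * α * |s|) (𝓝[>] (0:ℝ))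
        (𝓝 ((deriv φ 0 + 0) ^ α + M * α * |s|)) :=
      h1.tendsto.mono_left nhdsWithin_le_nhds
    simpa using h2
  have : (deriv φ s) ^ α ≤ (deriv φ 0) ^ α + M * α * |s| := by
    refine ge_of_tendsto hcont ?_
    filter_upwards [self_mem_nhdsWithin] with ε hε
    exact key ε hε
  linarith [this]
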